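/- Let A, B be nonempty closed convex semilinear (polyhedral) subsets of ℝⁿ with A ∩ B ≠ ∅, and let Ω be a bounded subset of ℝⁿ. Then there exists a constant ε > 0 such that dist(x, A) + dist(x, B) ≥ ε · dist(x, A ∩ B) for all x ∈ Ω. -/

import Mathlib

open Finset

variable {E : Type*} [NormedAddCommGroup E] [InnerProductSpace ℝ E]

/-- membership in the finitely generated cone of `s`. -/
def InCone (s : Finset E) (v : E) : Prop :=
  ∃ c : E → ℝ, (∀ a ∈ s, 0 ≤ c a) ∧ ∑ a ∈ s, c a • a = v

theorem inCone_mono {s t : Finset E} (h : s ⊆ t) {v : E} (hv : InCone s v) : InCone t v := by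
  obtain ⟨c, hc, hsum⟩ := hv
  classical
  refine ⟨fun a => if a ∈ s then c a else 0, fun a _ => ?_, ?_⟩
  · by_cases has : a ∈ s
    · simpa [has] using hc a has
    · simp [has]
  · rw [← Finset.sum_subset h (fun a _ has => by simp [has])]
    rw [← hsum]
    exact Finset.sum_congr rfl fun a has => by simp [has]

/-- Conic Carathéodory. -/
theorem inCone_exists_linearIndependent (s : Finset E) (v : E) (hv : InCone s v) :
    ∃ t ⊆ s, LinearIndependent ℝ ((↑) : ↥(t : Finset E) → E) ∧ InCone t v := by
  classical
  induction s using Finset.strongInduction with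
  | _ s ih =>
    by_cases hli : LinearIndependent ℝ ((↑) : ↥s → E)
    · exact ⟨s, Finset.Subset.refl s, hli, hv⟩
    · rw [Fintype.not_linearIndependent_iff] at hli
      obtain ⟨g, hg0, i0, hi0⟩ := hli
      set g' : E → ℝ := fun a => if h : a ∈ s then g ⟨a, h⟩ else 0 with hg'
      have hg'sum : ∑ a ∈ s, g' a • a = 0 := by
        rw [← Finset.sum_attach s (fun a => g' a • a)]
        rw [Finset.univ_eq_attach] at hg0
        rw [← hg0]
        exact Finset.sum_congr rfl fun i _ => by simp [hg', i.2]
      have hg'i0 : g' (i0 : E) ≠ 0 := by simpa [hg', i0.2] using hi0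
      have main : ∀ g'' : E → ℝ, (∑ a ∈ s, g'' a • a = 0) → (∃ a ∈ s, 0 < g'' a) →
          ∃ t ⊆ s, LinearIndependent ℝ ((↑) : ↥(t : Finset E) → E) ∧ InCone t v := by
        rintro g'' hsum ⟨a1, ha1, ha1pos⟩
        obtain ⟨c, hc, hcs⟩ := hv
        have hne : (s.filter (fun a => 0 < g'' a)).Nonempty := ⟨a1, by simp [ha1, ha1pos]⟩
        obtain ⟨a0, ha0mem, ha0min⟩ := Finset.exists_min_image _ (fun a => c a / g'' a) hne
        rw [Finset.mem_filter] at ha0mem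
        obtain ⟨ha0s, ha0pos⟩ := ha0mem
        set r : ℝ := c a0 / g'' a0 with hr
        have hrnn : 0 ≤ r := div_nonneg (hc _ ha0s) ha0pos.le
        have hkey : ∀ a ∈ s, 0 ≤ c a - r * g'' a := by
          intro a has
          rcases le_or_gt (g'' a) 0 with h | h
          · have h2 : 0 ≤ r * (-g'' a) := mul_nonneg hrnn (neg_nonneg.2 h)
            have := hc a has; nlinarith
          · rw [sub_nonneg, hr, div_mul_eq_mul_div, div_le_iff₀ ha0pos]
            have := ha0min a (Finset.mem_filter.2 ⟨has, h⟩)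
            rw [hr, div_le_div_iff₀ ha0pos h] at this
            nlinarith
        have hzero : c a0 - r * g'' a0 = 0 := by rw [hr, div_mul_cancel₀ _ ha0pos.ne', sub_self]
        have hrep : ∑ a ∈ s.erase a0, (c a - r * g'' a) • a = v := by
          have h1 : ∑ a ∈ s, (c a - r * g'' a) • a = v := by
            simp only [sub_smul, Finset.sum_sub_distrib, hcs, mul_smul, ← Finset.smul_sum,
              hsum, smul_zero, sub_zero]
          rw [← h1, ← Finset.add_sum_erase _ _ ha0s, hzero, zero_smul, zero_add]
        obtain ⟨t, hts, hli, hmem⟩ := ih (s.erase a0) (Finset.erase_ssubset ha0s)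
          ⟨_, fun a has => hkey a (Finset.mem_of_mem_erase has), hrep⟩
        exact ⟨t, hts.trans (Finset.erase_subset _ _), hli, hmem⟩
      rcases hg'i0.lt_or_gt with h | h
      · refine main (fun a => -g' a) ?_ ⟨i0, i0.2, by simpa using h⟩
        simp only [neg_smul, Finset.sum_neg_distrib, hg'sum, neg_zero]
      · exact main g' hg'sum ⟨i0, i0.2, h⟩


/-- the summation linear map -/
noncomputable def coneMap (t : Finset E) : (↥t → ℝ) →ₗ[ℝ] E where
  toFun c := ∑ i : ↥t, c i • (i : E)
  map_add' c d := by simp [add_smul, Finset.sum_add_distrib]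
  map_smul' r c := by simp [mul_smul, Finset.smul_sum]

theorem coneMap_inj (t : Finset E) (hli : LinearIndependent ℝ ((↑) : ↥t → E)) :
    Function.Injective (coneMap t) := by
  rw [← LinearMap.ker_eq_bot]
  rw [Fintype.linearIndependent_iff] at hli
  ext c
  simp only [LinearMap.mem_ker, Submodule.mem_bot]
  constructor
  · intro hc
    funext i
    have := hli c hc i
    exact this ▸ rfl
  · rintro rfl; simp [coneMap]

theorem inCone_iff_coneMap (t : Finset E) (v : E) :
    InCone t v ↔ ∃ c : ↥t → ℝ, (∀ i, 0 ≤ c i) ∧ coneMap t c = v := by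
  classical
  constructor
  · rintro ⟨c, hc, rfl⟩
    refine ⟨fun i => c i, fun i => hc _ i.2, ?_⟩
    simp only [coneMap, LinearMap.coe_mk, AddHom.coe_mk]
    exact Finset.sum_coe_sort t (fun b => c b • b)
  · rintro ⟨c, hc, rfl⟩
    refine ⟨fun a => if h : a ∈ t then c ⟨a, h⟩ else 0, fun a ha => by simp [ha, hc], ?_⟩
    simp only [coneMap, LinearMap.coe_mk, AddHom.coe_mk]
    rw [← Finset.sum_coe_sort t (fun b => (if h : b ∈ t then c ⟨b, h⟩ else 0) • b)]
    exact Finset.sum_congr rfl fun i _ => by simp [i.2]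

theorem exists_coord_bound [FiniteDimensional ℝ E] (t : Finset E)
    (hli : LinearIndependent ℝ ((↑) : ↥t → E)) :
    ∃ κ : ℝ, 0 ≤ κ ∧ ∀ c : E → ℝ, ∀ a ∈ t, |c a| ≤ κ * ‖∑ b ∈ t, c b • b‖ := by
  classical
  set Φ := coneMap t with hΦ
  have hinj := coneMap_inj t hli
  set e := LinearEquiv.ofInjective Φ hinj with he
  set L := LinearMap.toContinuousLinearMap (e.symm.toLinearMap) with hL
  refine ⟨‖L‖, norm_nonneg L, fun c a ha => ?_⟩
  set c' : ↥t → ℝ := fun i => c i with hc'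
  have hsum : ∑ b ∈ t, c b • b = Φ c' := (Finset.sum_coe_sort t (fun b => c b • b)).symm
  have hval : c' = L ⟨Φ c', ⟨c', rfl⟩⟩ := by
    have : e c' = ⟨Φ c', ⟨c', rfl⟩⟩ := by
      apply Subtype.ext; rfl
    rw [hL]
    simp only [LinearMap.coe_toContinuousLinearMap']
    rw [← this]
    simp
  have h1 : |c a| ≤ ‖c'‖ := by
    have := norm_le_pi_norm c' ⟨a, ha⟩
    simpa [hc'] using this
  have h2 : ‖c'‖ ≤ ‖L‖ * ‖Φ c'‖ := by
    conv_lhs => rw [hval]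
    simpa using L.le_opNorm ⟨Φ c', ⟨c', rfl⟩⟩
  rw [hsum]
  exact h1.trans h2

theorem isClosed_inCone [FiniteDimensional ℝ E] (s : Finset E) :
    IsClosed {v : E | InCone s v} := by
  classical
  have hcover : {v : E | InCone s v} =
      ⋃ t ∈ (s.powerset.filter (fun t => LinearIndependent ℝ ((↑) : ↥(t:Finset E) → E))),
        {v : E | InCone t v} := by
    ext v
    simp only [Set.mem_iUnion, Set.mem_setOf_eq, Finset.mem_filter, Finset.mem_powerset]
    constructor
    · intro hv
      obtain ⟨t, hts, hli, htv⟩ := inCone_exists_linearIndependent s v hv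
      exact ⟨t, ⟨hts, hli⟩, htv⟩
    · rintro ⟨t, ⟨hts, _⟩, htv⟩
      exact inCone_mono hts htv
  rw [hcover]
  apply Set.Finite.isClosed_biUnion (Finset.filter _ _).finite_toSet
  rintro t ht
  rw [Finset.mem_coe, Finset.mem_filter] at ht
  obtain ⟨-, hli⟩ := ht
  have himg : {v : E | InCone t v} = (coneMap t) '' {c : ↥t → ℝ | ∀ i, 0 ≤ c i} := by
    ext v
    rw [Set.mem_setOf_eq, inCone_iff_coneMap]
    constructor
    · rintro ⟨c, hc, rfl⟩; exact ⟨c, hc, rfl⟩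
    · rintro ⟨c, hc, rfl⟩; exact ⟨c, hc, rfl⟩
  rw [himg]
  have hce := LinearMap.isClosedEmbedding_of_injective
    (LinearMap.ker_eq_bot.2 (coneMap_inj t hli))
  apply hce.isClosedMap
  have : {c : ↥t → ℝ | ∀ i, 0 ≤ c i} = ⋂ i : ↥t, {c : ↥t → ℝ | 0 ≤ c i} := by
    ext c; simp [Set.mem_iInter]
  rw [this]
  exact isClosed_iInter fun i => isClosed_le continuous_const (continuous_apply i)

theorem convex_inCone (s : Finset E) : Convex ℝ {v : E | InCone s v} := by
  rintro v ⟨c, hc, rfl⟩ w ⟨d, hd, rfl⟩ p q hp hq hpq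
  refine ⟨fun a => p * c a + q * d a, fun a ha =>
    add_nonneg (mul_nonneg hp (hc a ha)) (mul_nonneg hq (hd a ha)), ?_⟩
  simp only [add_smul, mul_smul, Finset.sum_add_distrib, ← Finset.smul_sum]

theorem farkas [FiniteDimensional ℝ E] (s : Finset E) (v : E)
    (h : ∀ w : E, (∀ a ∈ s, (inner ℝ a w : ℝ) ≤ 0) → (inner ℝ v w : ℝ) ≤ 0) : InCone s v := by
  classical
  by_contra hv
  obtain ⟨f, u, hfv, hfb⟩ := geometric_hahn_banach_point_closed (convex_inCone s)
    (isClosed_inCone s) hv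
  have h0 : InCone s (0 : E) := ⟨fun _ => 0, fun _ _ => le_rfl, by simp⟩
  have hu0 : u < 0 := by simpa using hfb 0 h0
  have hfa : ∀ a ∈ s, 0 ≤ f a := by
    intro a ha
    by_contra hfa
    push_neg at hfa
    set r : ℝ := (u - 1) / f a with hrr
    have hr : 0 < r := div_pos_iff.2 (Or.inr ⟨by linarith, hfa⟩)
    have hmem : InCone s (r • a) := by
      refine ⟨fun x => if x = a then r else 0, fun x _ => ?_, ?_⟩
      · by_cases hxa : x = a <;> simp [hxa, hr.le]
      · simp [ite_smul, Finset.sum_ite_eq', ha]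
    have := hfb _ hmem
    rw [map_smul, smul_eq_mul, hrr] at this
    rw [div_mul_eq_mul_div, mul_div_assoc, div_self (ne_of_lt hfa), mul_one] at this
    linarith
  set w : E := -(InnerProductSpace.toDual ℝ E).symm f with hw
  have hwa : ∀ a ∈ s, (inner ℝ a w : ℝ) ≤ 0 := by
    intro a ha
    rw [hw, real_inner_comm, inner_neg_left, InnerProductSpace.toDual_symm_apply]
    linarith [hfa a ha]
  have := h w hwa
  rw [hw, real_inner_comm, inner_neg_left, InnerProductSpace.toDual_symm_apply] at this
  have hfv0 : f v < 0 := lt_trans hfv hu0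
  linarith
open Finset
section helper
variable {ι : Type*}

theorem exists_pos_forall_finset (s : Finset ι) (Q : ℝ → ι → Prop)
    (hmono : ∀ i ∈ s, ∀ t t' : ℝ, 0 < t' → t' ≤ t → Q t i → Q t' i)
    (hex : ∀ i ∈ s, ∃ t > 0, Q t i) : ∃ t > 0, ∀ i ∈ s, Q t i := by
  classical
  induction s using Finset.induction_on with
  | empty => exact ⟨1, one_pos, by simp⟩
  | @insert a s ha ih =>
    obtain ⟨t, ht, hts⟩ := ih
      (fun i hi => hmono i (Finset.mem_insert_of_mem hi))
      (fun i hi => hex i (Finset.mem_insert_of_mem hi))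
    obtain ⟨ta, hta, hqa⟩ := hex a (Finset.mem_insert_self a s)
    refine ⟨min t ta, lt_min ht hta, fun i hi => ?_⟩
    rcases Finset.mem_insert.1 hi with rfl | hi
    · exact hmono i (Finset.mem_insert_self i s) ta (min t ta) (lt_min ht hta)
        (min_le_right _ _) hqa
    · exact hmono i (Finset.mem_insert_of_mem hi) t (min t ta) (lt_min ht hta)
        (min_le_left _ _) (hts i hi)
end helper

variable {E : Type*} [NormedAddCommGroup E] [InnerProductSpace ℝ E]

theorem convex_poly (s : Finset (E × ℝ)) :
    Convex ℝ {x : E | ∀ p ∈ s, (inner ℝ p.1 x : ℝ) ≤ p.2} := by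
  intro x hx y hy a b ha hb hab
  intro p hp
  have hx' := hx p hp
  have hy' := hy p hp
  rw [inner_add_right, real_inner_smul_right, real_inner_smul_right]
  have h1 : a * (inner ℝ p.1 x : ℝ) ≤ a * p.2 := mul_le_mul_of_nonneg_left hx' ha
  have h2 : b * (inner ℝ p.1 y : ℝ) ≤ b * p.2 := mul_le_mul_of_nonneg_left hy' hb
  have h3 : a * p.2 + b * p.2 = p.2 := by rw [← add_mul, hab, one_mul]
  linarith

theorem isClosed_poly (s : Finset (E × ℝ)) :
    IsClosed {x : E | ∀ p ∈ s, (inner ℝ p.1 x : ℝ) ≤ p.2} := by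
  have : {x : E | ∀ p ∈ s, (inner ℝ p.1 x : ℝ) ≤ p.2} =
      ⋂ p ∈ s, {x : E | (inner ℝ p.1 x : ℝ) ≤ p.2} := by
    ext x; simp
  rw [this]
  exact isClosed_biInter fun p _ =>
    isClosed_le (Continuous.inner continuous_const continuous_id) continuous_const

theorem hoffman [FiniteDimensional ℝ E] (s : Finset (E × ℝ))
    (hne : {x : E | ∀ p ∈ s, (inner ℝ p.1 x : ℝ) ≤ p.2}.Nonempty) :
    ∃ C > 0, ∀ x : E, Metric.infDist x {y : E | ∀ p ∈ s, (inner ℝ p.1 y : ℝ) ≤ p.2}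
      ≤ C * ∑ p ∈ s, max 0 ((inner ℝ p.1 x : ℝ) - p.2) := by
  classical
  set S := {y : E | ∀ p ∈ s, (inner ℝ p.1 y : ℝ) ≤ p.2} with hS
  have hκ : ∀ t : Finset E, ∃ κ : ℝ, 0 ≤ κ ∧ (LinearIndependent ℝ ((↑) : ↥t → E) →
      ∀ c : E → ℝ, ∀ a ∈ t, |c a| ≤ κ * ‖∑ b ∈ t, c b • b‖) := by
    intro t
    by_cases h : LinearIndependent ℝ ((↑) : ↥t → E)
    · obtain ⟨κ, hκ0, hκ2⟩ := exists_coord_bound t h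
      exact ⟨κ, hκ0, fun _ => hκ2⟩
    · exact ⟨0, le_rfl, fun h' => absurd h' h⟩
  choose κf hκ0 hκs using hκ
  set P := (s.image Prod.fst).powerset with hP
  have hPne : P.Nonempty := ⟨∅, Finset.empty_mem_powerset _⟩
  set C := 1 + P.sup' hPne (fun t => (s.card : ℝ) * κf t) with hC
  have hCb : ∀ t ∈ P, (s.card : ℝ) * κf t ≤ C := by
    intro t ht
    have := Finset.le_sup' (fun t => (s.card : ℝ) * κf t) ht
    rw [hC]; linarith
  have hC0 : 0 < C := by
    have h1 := Finset.le_sup' (fun t => (s.card : ℝ) * κf t) (Finset.empty_mem_powerset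
      (s.image Prod.fst))
    have h0 : (0:ℝ) ≤ (s.card : ℝ) * κf ∅ := mul_nonneg (Nat.cast_nonneg _) (hκ0 ∅)
    rw [hC]; linarith
  refine ⟨C, hC0, fun x => ?_⟩
  set R := ∑ p ∈ s, max 0 ((inner ℝ p.1 x : ℝ) - p.2) with hR
  have hR0 : 0 ≤ R := Finset.sum_nonneg fun p _ => le_max_left _ _
  have hconv : Convex ℝ S := convex_poly s
  have hclosed : IsClosed S := isClosed_poly s
  obtain ⟨v, hvS, hvmin⟩ := exists_norm_eq_iInf_of_complete_convex hne
    hclosed.isComplete hconv x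
  have hdist : Metric.infDist x S = ‖x - v‖ := by
    rw [Metric.infDist_eq_iInf, hvmin]
    simp_rw [dist_eq_norm]
  have hnormal := (norm_eq_iInf_iff_real_inner_le_zero hconv hvS).1 hvmin
  have hvSmem : ∀ p ∈ s, (inner ℝ p.1 v : ℝ) ≤ p.2 := hvS
  set F := (s.filter (fun p => (inner ℝ p.1 v : ℝ) = p.2)).image Prod.fst with hF
  have hcone : InCone F (x - v) := by
    apply farkas
    intro w hw
    have hmono : ∀ p ∈ s, ∀ t t' : ℝ, 0 < t' → t' ≤ t →
        ((inner ℝ p.1 v : ℝ) + t * (inner ℝ p.1 w : ℝ) ≤ p.2) →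
        ((inner ℝ p.1 v : ℝ) + t' * (inner ℝ p.1 w : ℝ) ≤ p.2) := by
      intro p hp t t' ht' htt' hQ
      have hvp := hvSmem p hp
      rcases le_or_gt (inner ℝ p.1 w : ℝ) 0 with h | h
      · nlinarith
      · nlinarith
    have hex : ∀ p ∈ s, ∃ t > (0:ℝ), (inner ℝ p.1 v : ℝ) + t * (inner ℝ p.1 w : ℝ) ≤ p.2 := by
      intro p hp
      rcases le_or_gt (inner ℝ p.1 w : ℝ) 0 with h | h
      · exact ⟨1, one_pos, by nlinarith [hvSmem p hp]⟩
      · have hpa : (inner ℝ p.1 v : ℝ) ≠ p.2 := by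
          intro heq
          have hmemF : p.1 ∈ F := Finset.mem_image.2 ⟨p, Finset.mem_filter.2 ⟨hp, heq⟩, rfl⟩
          exact absurd (hw p.1 hmemF) (not_le.2 h)
        have hlt : (inner ℝ p.1 v : ℝ) < p.2 := lt_of_le_of_ne (hvSmem p hp) hpa
        refine ⟨(p.2 - (inner ℝ p.1 v : ℝ)) / (inner ℝ p.1 w : ℝ), div_pos (by linarith) h, ?_⟩
        rw [div_mul_cancel₀ _ h.ne']
        linarith
    obtain ⟨t, ht0, htQ⟩ := exists_pos_forall_finset s
      (fun t p => (inner ℝ p.1 v : ℝ) + t * (inner ℝ p.1 w : ℝ) ≤ p.2) hmono hex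
    have hmem : v + t • w ∈ S := by
      intro p hp
      rw [inner_add_right, real_inner_smul_right]
      exact htQ p hp
    have hn := hnormal _ hmem
    have heq : v + t • w - v = t • w := by abel
    rw [heq, real_inner_smul_right] at hn
    have h0' : t * (inner ℝ (x - v) w : ℝ) ≤ t * 0 := by rwa [mul_zero]
    exact le_of_mul_le_mul_left h0' ht0
  obtain ⟨tF, htF, hli, c, hc, hcs⟩ := inCone_exists_linearIndependent F _ hcone
  have hterm : ∀ a ∈ tF, (inner ℝ a (x - v) : ℝ) ≤ R := by
    intro a ha
    obtain ⟨p, hpF, rfl⟩ := Finset.mem_image.1 (htF ha)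
    rw [Finset.mem_filter] at hpF
    obtain ⟨hps, hact⟩ := hpF
    rw [inner_sub_right, hact]
    calc (inner ℝ p.1 x : ℝ) - p.2 ≤ max 0 ((inner ℝ p.1 x : ℝ) - p.2) := le_max_right _ _
    _ ≤ R := by
        rw [hR]
        exact Finset.single_le_sum (f := fun q => max 0 ((inner ℝ q.1 x : ℝ) - q.2))
          (fun q _ => le_max_left _ _) hps
  have hnormxv : ‖x - v‖ ^ 2 = ∑ a ∈ tF, c a * (inner ℝ a (x - v) : ℝ) := by
    rw [← real_inner_self_eq_norm_sq, ← hcs, sum_inner]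
    exact Finset.sum_congr rfl fun a _ => real_inner_smul_left _ _ _
  have hcard : (tF.card : ℝ) ≤ (s.card : ℝ) := by
    have h1 : tF.card ≤ F.card := Finset.card_le_card htF
    have h2 : F.card ≤ (s.filter (fun p => (inner ℝ p.1 v : ℝ) = p.2)).card :=
      Finset.card_image_le
    have h3 := Finset.card_filter_le s (fun p => (inner ℝ p.1 v : ℝ) = p.2)
    exact_mod_cast le_trans h1 (le_trans h2 h3)
  have hkey : ‖x - v‖ ^ 2 ≤ (s.card : ℝ) * κf tF * ‖x - v‖ * R := by
    rw [hnormxv]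
    have step : ∀ a ∈ tF, c a * (inner ℝ a (x - v) : ℝ) ≤ (κf tF * ‖x - v‖) * R := by
      intro a ha
      have h1 : c a ≤ κf tF * ‖x - v‖ := by
        have hb := hκs tF hli c a ha
        rw [hcs] at hb
        exact (le_abs_self _).trans hb
      have h2 := hterm a ha
      have hca : 0 ≤ c a := hc a ha
      have h4 : c a * (inner ℝ a (x - v) : ℝ) ≤ c a * R := mul_le_mul_of_nonneg_left h2 hca
      have h5 : c a * R ≤ (κf tF * ‖x - v‖) * R := mul_le_mul_of_nonneg_right h1 hR0
      linarith
    calc ∑ a ∈ tF, c a * (inner ℝ a (x - v) : ℝ) ≤ ∑ _a ∈ tF, (κf tF * ‖x - v‖) * R :=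
        Finset.sum_le_sum step
      _ = (tF.card : ℝ) * ((κf tF * ‖x - v‖) * R) := by rw [Finset.sum_const, nsmul_eq_mul]
      _ ≤ (s.card : ℝ) * κf tF * ‖x - v‖ * R := by
          have hnn : 0 ≤ (κf tF * ‖x - v‖) * R :=
            mul_nonneg (mul_nonneg (hκ0 tF) (norm_nonneg _)) hR0
          have := mul_le_mul_of_nonneg_right hcard hnn
          nlinarith
  rw [hdist]
  rcases eq_or_ne ‖x - v‖ 0 with h0 | h0
  · rw [h0]
    exact mul_nonneg hC0.le hR0
  · have hpos : 0 < ‖x - v‖ := (norm_nonneg _).lt_of_ne' h0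
    have hmain : ‖x - v‖ ≤ (s.card : ℝ) * κf tF * R := by
      rw [pow_two] at hkey
      nlinarith
    refine hmain.trans ?_
    have hFP : tF ∈ P := Finset.mem_powerset.2 (htF.trans
      (Finset.image_subset_image (Finset.filter_subset _ _)))
    exact mul_le_mul_of_nonneg_right (hCb tF hFP) hR0

theorem res_le_norm_mul_infDist [FiniteDimensional ℝ E] (s : Finset (E × ℝ)) {A : Set E}
    (hAeq : A = {x : E | ∀ p ∈ s, (inner ℝ p.1 x : ℝ) ≤ p.2}) (hne : A.Nonempty)
    (p : E × ℝ) (hp : p ∈ s) (x : E) :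
    max 0 ((inner ℝ p.1 x : ℝ) - p.2) ≤ ‖p.1‖ * Metric.infDist x A := by
  have hclosed : IsClosed A := hAeq ▸ isClosed_poly s
  obtain ⟨y, hyA, hyd⟩ := hclosed.exists_infDist_eq_dist hne x
  have hyp : (inner ℝ p.1 y : ℝ) ≤ p.2 := by rw [hAeq] at hyA; exact hyA p hp
  apply max_le (mul_nonneg (norm_nonneg _) Metric.infDist_nonneg)
  have h1 : (inner ℝ p.1 x : ℝ) - p.2 ≤ (inner ℝ p.1 (x - y) : ℝ) := by
    rw [inner_sub_right]; linarith
  have h2 : (inner ℝ p.1 (x - y) : ℝ) ≤ ‖p.1‖ * ‖x - y‖ := real_inner_le_norm _ _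
  rw [hyd, dist_eq_norm]
  linarith

/-- Two nonempty closed convex polyhedral (semilinear) sets `A`, `B` in
ℝⁿ with `A ∩ B ≠ ∅` are regularly situated with exponent 1: on any bounded set `Ω`,
`dist(x, A) + dist(x, B) ≥ ε · dist(x, A ∩ B)` for some `ε > 0`. -/
theorem polyhedral_regularly_situated {n : ℕ}
    (A B : Set (EuclideanSpace ℝ (Fin n)))
    (hA : ∃ s : Finset (EuclideanSpace ℝ (Fin n) × ℝ),
      A = {x | ∀ p ∈ s, (inner ℝ p.1 x : ℝ) ≤ p.2})
    (hB : ∃ s : Finset (EuclideanSpace ℝ (Fin n) × ℝ),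
      B = {x | ∀ p ∈ s, (inner ℝ p.1 x : ℝ) ≤ p.2})
    (hAne : A.Nonempty) (hBne : B.Nonempty) (hABne : (A ∩ B).Nonempty)
    (Ω : Set (EuclideanSpace ℝ (Fin n))) (hΩ : Bornology.IsBounded Ω) :
    ∃ ε > (0 : ℝ), ∀ x ∈ Ω,
      ε * Metric.infDist x (A ∩ B) ≤ Metric.infDist x A + Metric.infDist x B := by
  classical
  obtain ⟨sa, hsa⟩ := hA
  obtain ⟨sb, hsb⟩ := hB
  have hABeq : A ∩ B =
      {x : EuclideanSpace ℝ (Fin n) | ∀ p ∈ sa ∪ sb, (inner ℝ p.1 x : ℝ) ≤ p.2} := by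
    rw [hsa, hsb]
    ext x
    simp only [Set.mem_inter_iff, Set.mem_setOf_eq, Finset.mem_union]
    constructor
    · rintro ⟨h1, h2⟩ p hp
      rcases hp with h | h
      exacts [h1 p h, h2 p h]
    · intro h
      exact ⟨fun p hp => h p (Or.inl hp), fun p hp => h p (Or.inr hp)⟩
  obtain ⟨C, hC0, hC⟩ := hoffman (sa ∪ sb) (hABeq ▸ hABne)
  set M := ∑ p ∈ sa ∪ sb, ‖p.1‖ with hM
  have hM0 : 0 ≤ M := Finset.sum_nonneg fun p _ => norm_nonneg _
  refine ⟨1 / (C * (M + 1)), by positivity, fun x _ => ?_⟩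
  set dA := Metric.infDist x A with hdA
  set dB := Metric.infDist x B with hdB
  have hdA0 : 0 ≤ dA := Metric.infDist_nonneg
  have hdB0 : 0 ≤ dB := Metric.infDist_nonneg
  have hres : ∀ p ∈ sa ∪ sb, max 0 ((inner ℝ p.1 x : ℝ) - p.2) ≤ ‖p.1‖ * (dA + dB) := by
    intro p hp
    rcases Finset.mem_union.1 hp with h | h
    · have key := res_le_norm_mul_infDist sa hsa hAne p h x
      have : ‖p.1‖ * dA ≤ ‖p.1‖ * (dA + dB) :=
        mul_le_mul_of_nonneg_left (by linarith) (norm_nonneg _)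
      exact key.trans this
    · have key := res_le_norm_mul_infDist sb hsb hBne p h x
      have : ‖p.1‖ * dB ≤ ‖p.1‖ * (dA + dB) :=
        mul_le_mul_of_nonneg_left (by linarith) (norm_nonneg _)
      exact key.trans this
  have hsum : ∑ p ∈ sa ∪ sb, max 0 ((inner ℝ p.1 x : ℝ) - p.2) ≤ M * (dA + dB) := by
    calc ∑ p ∈ sa ∪ sb, max 0 ((inner ℝ p.1 x : ℝ) - p.2)
        ≤ ∑ p ∈ sa ∪ sb, ‖p.1‖ * (dA + dB) := Finset.sum_le_sum hres
      _ = M * (dA + dB) := by rw [hM, Finset.sum_mul]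
  have hmain : Metric.infDist x (A ∩ B) ≤ C * (M * (dA + dB)) := by
    rw [hABeq]
    exact (hC x).trans (mul_le_mul_of_nonneg_left hsum hC0.le)
  have hpos : (0:ℝ) < C * (M + 1) := by positivity
  rw [div_mul_eq_mul_div, one_mul, div_le_iff₀ hpos]
  have h1 : 0 ≤ C * (dA + dB) := mul_nonneg hC0.le (by linarith)
  nlinarith
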